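/- Let Ω be a finite set and let g, h be permutations of Ω. If g and h are equivalent, then the centralizer of g in Sym(Ω) equals the centralizer of h in Sym(Ω). -/

import Mathlib

/-- The set of points of `Ω` lying on a cycle of `σ` of length exactly `i`
(for `i = 1`, the fixed points of `σ`). -/
def Equiv.Perm.pointsOfCycleLength {Ω : Type*} [Fintype Ω] [DecidableEq Ω]
    (σ : Equiv.Perm Ω) (i : ℕ) : Set Ω :=
  {a : Ω | Function.minimalPeriod σ a = i}

/-- The product of the cycles of `σ` of length exactly `i`: the permutation agreeing
with `σ` on points lying on cycles of length `i` and fixing all other points. -/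
noncomputable def Equiv.Perm.cyclePart {Ω : Type*} [Fintype Ω] [DecidableEq Ω]
    (σ : Equiv.Perm Ω) (i : ℕ) : Equiv.Perm Ω :=
  (σ.cycleFactorsFinset.filter fun c => c.support.card = i).noncommProd id
    (fun _ ha _ hb hab =>
      ((σ.cycleFactorsFinset_pairwise_disjoint
        (Finset.mem_filter.mp ha).1 (Finset.mem_filter.mp hb).1 hab)).commute)

/-- `g` and `h` are locally equivalent at `i` if they have the same points on cycles of
length `i` and the product of the cycles of `h` of length `i` is an integer power of the
product of the cycles of `g` of length `i`. -/
def Equiv.Perm.LocallyEquivalentAt {Ω : Type*} [Fintype Ω] [DecidableEq Ω]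
    (g h : Equiv.Perm Ω) (i : ℕ) : Prop :=
  g.pointsOfCycleLength i = h.pointsOfCycleLength i ∧
    ∃ k : ℤ, h.cyclePart i = (g.cyclePart i) ^ k

/-- `g` and `h` are equivalent if they are locally equivalent at every `i ≥ 1`. -/
def Equiv.Perm.EquivalentPerm {Ω : Type*} [Fintype Ω] [DecidableEq Ω]
    (g h : Equiv.Perm Ω) : Prop :=
  ∀ i : ℕ, 1 ≤ i → g.LocallyEquivalentAt h i

section Aux
open Equiv Equiv.Perm Function
set_option linter.unusedSectionVars false
variable {Ω : Type*} [Fintype Ω] [DecidableEq Ω]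

private lemma minP_eq_card (σ : Perm Ω) {a : Ω} (ha : σ a ≠ a) :
    Function.minimalPeriod σ a = (σ.cycleOf a).support.card := by
  have hmem : a ∈ (σ.cycleOf a).support :=
    mem_support_cycleOf_iff.2 ⟨SameCycle.refl _ _, Equiv.Perm.mem_support.2 ha⟩
  have key : ∀ n : ℕ, (σ ^ n) a = a ↔ (σ.cycleOf a).support.card ∣ n :=
    fun n => (isCycleOn_support_cycleOf σ a).pow_apply_eq hmem
  apply Nat.dvd_antisymm
  · exact Function.IsPeriodicPt.minimalPeriod_dvd
      (by show σ^[_] a = a; rw [Equiv.Perm.iterate_eq_pow]; exact (key _).2 dvd_rfl)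
  · exact (key _).1 (by
      have := Function.isPeriodicPt_minimalPeriod σ a
      rwa [Function.IsPeriodicPt, Function.IsFixedPt, Equiv.Perm.iterate_eq_pow] at this)

private lemma minP_pos (σ : Perm Ω) (a : Ω) : 0 < Function.minimalPeriod σ a := by
  apply Function.minimalPeriod_pos_of_mem_periodicPts
  exact ⟨orderOf σ, orderOf_pos σ, by
    show σ^[_] a = a
    rw [Equiv.Perm.iterate_eq_pow, pow_orderOf_eq_one]; rfl⟩

private lemma minP_dvd {σ : Perm Ω} {a : Ω} {n : ℕ} (h : (σ ^ n) a = a) :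
    Function.minimalPeriod σ a ∣ n :=
  Function.IsPeriodicPt.minimalPeriod_dvd
    (by show σ^[_] a = a; rwa [Equiv.Perm.iterate_eq_pow])

private lemma pow_minP (σ : Perm Ω) (a : Ω) : (σ ^ Function.minimalPeriod σ a) a = a := by
  have := Function.isPeriodicPt_minimalPeriod σ a
  rwa [Function.IsPeriodicPt, Function.IsFixedPt, Equiv.Perm.iterate_eq_pow] at this

private lemma pow_apply_of_dvd {σ : Perm Ω} {a : Ω} {n : ℕ}
    (h : Function.minimalPeriod σ a ∣ n) : (σ ^ n) a = a := by
  obtain ⟨m, rfl⟩ := h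
  rw [pow_mul]
  have : ∀ m : ℕ, ((σ ^ Function.minimalPeriod σ a) ^ m) a = a := by
    intro m
    induction m with
    | zero => rfl
    | succ m ih => rw [pow_succ, Equiv.Perm.mul_apply, pow_minP, ih]
  -- careful: (x^p)^m a, apply order
  exact this m

private lemma minP_apply_commute {x σ : Perm Ω} (hx : Commute x σ) (a : Ω) :
    Function.minimalPeriod σ (x a) = Function.minimalPeriod σ a := by
  have key : ∀ (y : Perm Ω), Commute y σ → ∀ b : Ω,
      Function.minimalPeriod σ (y b) ∣ Function.minimalPeriod σ b := by
    intro y hy b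
    apply minP_dvd
    rw [← Equiv.Perm.mul_apply, ← (hy.pow_right _).eq, Equiv.Perm.mul_apply, pow_minP]
  refine Nat.dvd_antisymm (key x hx a) ?_
  have := key x⁻¹ (by exact (hx.inv_left)) (x a)
  rwa [← Equiv.Perm.mul_apply, inv_mul_cancel, Equiv.Perm.one_apply] at this

private lemma noncommProd_apply_of_subset (σ : Perm Ω) (s : Finset (Perm Ω))
    (hs : s ⊆ σ.cycleFactorsFinset)
    (comm : (s : Set (Perm Ω)).Pairwise (fun a b => Commute (id a) (id b))) (a : Ω) :
    s.noncommProd id comm a = if σ.cycleOf a ∈ s then σ a else a := by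
  classical
  induction s using Finset.induction with
  | empty => rw [Finset.noncommProd_empty]; simp
  | @insert c s hc ih =>
    have hc' : c ∈ σ.cycleFactorsFinset := hs (Finset.mem_insert_self c s)
    have hsub : s ⊆ σ.cycleFactorsFinset := fun y hy => hs (Finset.mem_insert_of_mem hy)
    rw [Finset.noncommProd_insert_of_notMem _ _ _ _ hc]
    rw [Equiv.Perm.mul_apply, ih hsub _]
    by_cases h1 : σ.cycleOf a ∈ s
    · have hco : σ.cycleOf a ∈ σ.cycleFactorsFinset := hsub h1
      have hne : c ≠ σ.cycleOf a := fun h => hc (h ▸ h1)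
      have hdisj := σ.cycleFactorsFinset_pairwise_disjoint hc' hco hne
      have hmem : σ a ∈ (σ.cycleOf a).support := by
        have ha : a ∈ σ.support := (cycleOf_mem_cycleFactorsFinset_iff).1 hco
        have : a ∈ (σ.cycleOf a).support :=
          mem_support_cycleOf_iff.2 ⟨SameCycle.refl _ _, ha⟩
        exact (mem_cycleFactorsFinset_support hco a).2 this
      have hns : σ a ∉ c.support :=
        Finset.disjoint_right.mp hdisj.disjoint_support hmem
      rw [if_pos h1, if_pos (Finset.mem_insert_of_mem h1)]
      show c (σ a) = σ a
      exact Equiv.Perm.notMem_support.1 hns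
    · rw [if_neg h1]
      by_cases h2 : σ.cycleOf a = c
      · rw [if_pos (h2 ▸ Finset.mem_insert_self c s)]
        have ha : a ∈ c.support := by
          rw [← h2]
          refine mem_support_cycleOf_iff.2 ⟨SameCycle.refl _ _, ?_⟩
          exact (cycleOf_mem_cycleFactorsFinset_iff).1 (h2 ▸ hc')
        show c a = σ a
        exact (Equiv.Perm.mem_cycleFactorsFinset_iff.1 hc').2 a ha
      · rw [if_neg (fun hh => ((Finset.mem_insert.1 hh).elim h2 h1))]
        have hns : a ∉ c.support := by
          intro ha
          exact h2 ((cycle_is_cycleOf ha hc').symm)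
        show c a = a
        exact Equiv.Perm.notMem_support.1 hns

private lemma cyclePart_apply_eq (σ : Perm Ω) {a : Ω} {i : ℕ}
    (h : Function.minimalPeriod σ a = i) : σ.cyclePart i a = σ a := by
  rw [Equiv.Perm.cyclePart]; erw [noncommProd_apply_of_subset σ _ (Finset.filter_subset _ _)]
  by_cases ha : σ a = a
  · rw [if_neg, ha]
    intro hmem
    have := (Finset.mem_filter.1 hmem).1
    rw [cycleOf_mem_cycleFactorsFinset_iff, Equiv.Perm.mem_support] at this
    exact this ha
  · rw [if_pos]
    exact Finset.mem_filter.2 ⟨cycleOf_mem_cycleFactorsFinset_iff.2 (Equiv.Perm.mem_support.2 ha),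
      by rw [← minP_eq_card σ ha, h]⟩

private lemma cyclePart_apply_ne (σ : Perm Ω) {a : Ω} {i : ℕ}
    (h : Function.minimalPeriod σ a ≠ i) : σ.cyclePart i a = a := by
  rw [Equiv.Perm.cyclePart]; erw [noncommProd_apply_of_subset σ _ (Finset.filter_subset _ _)]
  rw [if_neg]
  intro hmem
  obtain ⟨h1, h2⟩ := Finset.mem_filter.1 hmem
  rw [cycleOf_mem_cycleFactorsFinset_iff, Equiv.Perm.mem_support] at h1
  exact h (by rw [minP_eq_card σ h1, h2])

private lemma cyclePart_pow_apply (σ : Perm Ω) (i : ℕ) (n : ℕ) (a : Ω)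
    (h : Function.minimalPeriod σ a = i) : (σ.cyclePart i ^ n) a = (σ ^ n) a := by
  induction n with
  | zero => rfl
  | succ n ih =>
    rw [pow_succ', pow_succ', Equiv.Perm.mul_apply, Equiv.Perm.mul_apply, ih]
    exact cyclePart_apply_eq σ (by
      rw [minP_apply_commute ((Commute.refl σ).pow_left n) a, h])

private lemma cyclePart_pow_apply_ne (σ : Perm Ω) (i : ℕ) (n : ℕ) (a : Ω)
    (h : Function.minimalPeriod σ a ≠ i) : (σ.cyclePart i ^ n) a = a := by
  induction n with
  | zero => rfl
  | succ n ih => rw [pow_succ', Equiv.Perm.mul_apply, ih, cyclePart_apply_ne σ h]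

private lemma commute_cyclePart {x σ : Perm Ω} (hx : Commute x σ) (i : ℕ) :
    Commute x (σ.cyclePart i) := by
  ext a
  rw [Equiv.Perm.mul_apply, Equiv.Perm.mul_apply]
  by_cases h : Function.minimalPeriod σ a = i
  · rw [cyclePart_apply_eq σ h, cyclePart_apply_eq σ (by rw [minP_apply_commute hx, h]),
      ← Equiv.Perm.mul_apply, ← Equiv.Perm.mul_apply, hx.eq]
  · rw [cyclePart_apply_ne σ h, cyclePart_apply_ne σ (by rw [minP_apply_commute hx]; exact h)]

private lemma cyclePart_pow_card (σ : Perm Ω) (i : ℕ) : σ.cyclePart i ^ i = 1 := by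
  ext a
  by_cases h : Function.minimalPeriod σ a = i
  · rw [cyclePart_pow_apply σ i i a h, Equiv.Perm.one_apply]
    exact pow_apply_of_dvd (h ▸ dvd_rfl)
  · rw [cyclePart_pow_apply_ne σ i i a h, Equiv.Perm.one_apply]

private lemma minP_one_fixed {σ : Perm Ω} {a : Ω}
    (h : Function.minimalPeriod σ a = 1) : σ a = a :=
  Function.minimalPeriod_eq_one_iff_isFixedPt.1 h

private lemma cyclePart_one_eq (σ : Perm Ω) : σ.cyclePart 1 = 1 := by
  ext a
  by_cases h : Function.minimalPeriod σ a = 1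
  · rw [cyclePart_apply_eq σ h, Equiv.Perm.one_apply, minP_one_fixed h]
  · rw [cyclePart_apply_ne σ h, Equiv.Perm.one_apply]

private lemma zpow_eq_of_pow_eq_one {G : Type*} [Group G] {x : G} {i : ℕ}
    (hx : x ^ i = 1) (hi : 0 < i) (k : ℤ) : x ^ k = x ^ (k % (i : ℤ)).toNat := by
  have h0 : (i : ℤ) ≠ 0 := by exact_mod_cast hi.ne'
  conv_lhs => rw [← Int.mul_ediv_add_emod k i]
  rw [zpow_add, zpow_mul, zpow_natCast, hx, one_zpow, one_mul,
    ← zpow_natCast, Int.toNat_of_nonneg (Int.emod_nonneg k h0)]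

private lemma pow_mod_of_pow_eq_one {G : Type*} [Group G] {x : G} {i : ℕ}
    (hx : x ^ i = 1) (n : ℕ) : x ^ n = x ^ (n % i) := by
  conv_lhs => rw [← Nat.div_add_mod n i]
  rw [pow_add, pow_mul, hx, one_pow, one_mul]

private lemma equivalent_symm {g h : Perm Ω} (heq : g.EquivalentPerm h) :
    h.EquivalentPerm g := by
  intro i hi
  obtain ⟨hcls, k, hk⟩ := heq i hi
  refine ⟨hcls.symm, ?_⟩
  by_cases hex : ∃ a, Function.minimalPeriod g a = i
  swap
  · push_neg at hex
    have h1 : g.cyclePart i = 1 := by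
      ext a; rw [cyclePart_apply_ne g (hex a), Equiv.Perm.one_apply]
    exact ⟨1, by rw [zpow_one, hk, h1, one_zpow]⟩
  obtain ⟨a₀, ha₀⟩ := hex
  rcases eq_or_lt_of_le hi with hi1 | hi2
  · refine ⟨1, ?_⟩
    rw [zpow_one, ← hi1, cyclePart_one_eq, cyclePart_one_eq]
  -- i ≥ 2
  have hgi : g.cyclePart i ^ i = 1 := cyclePart_pow_card g i
  have hipos : 0 < i := hi
  set m : ℕ := (k % (i : ℤ)).toNat with hm
  have hk' : h.cyclePart i = g.cyclePart i ^ m := by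
    rw [hk, zpow_eq_of_pow_eq_one hgi hipos k]
  have hha₀ : Function.minimalPeriod h a₀ = i := by
    have : a₀ ∈ h.pointsOfCycleLength i := hcls ▸ ha₀
    exact this
  -- coprimality
  set d : ℕ := Nat.gcd m i with hd
  have hdi : d ∣ i := Nat.gcd_dvd_right m i
  have hdm : d ∣ m := Nat.gcd_dvd_left m i
  have hdpos : 0 < d := Nat.gcd_pos_of_pos_right m hipos
  have hkey : (h ^ (i / d)) a₀ = a₀ := by
    rw [← cyclePart_pow_apply h i (i / d) a₀ hha₀, hk', ← pow_mul,
      cyclePart_pow_apply g i _ a₀ ha₀]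
    apply pow_apply_of_dvd
    rw [ha₀]
    obtain ⟨m'', hm''⟩ := hdm
    rw [hm'']
    have heq2 : d * m'' * (i / d) = m'' * i := by
      rw [mul_comm d m'', mul_assoc, Nat.mul_div_cancel' hdi]
    rw [heq2]
    exact Dvd.intro_left m'' rfl
  have hidvd : i ∣ i / d := by
    have := minP_dvd hkey
    rwa [hha₀] at this
  have hd1 : d = 1 := by
    have h1 : i / d ≤ i := Nat.div_le_self i d
    have h2 : 0 < i / d := Nat.div_pos (Nat.le_of_dvd hipos hdi) hdpos
    have h3 : i / d = i := le_antisymm h1 (Nat.le_of_dvd h2 hidvd)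
    have h4 : d * (i / d) = i := Nat.mul_div_cancel' hdi
    rw [h3] at h4
    exact Nat.eq_of_mul_eq_mul_right hipos (by rw [h4, one_mul])
  have hcop : Nat.Coprime m i := hd1
  obtain ⟨m', hm'⟩ := Nat.exists_mul_mod_eq_one_of_coprime hcop hi2
  refine ⟨(m' : ℤ), ?_⟩
  rw [zpow_natCast, hk', ← pow_mul, pow_mod_of_pow_eq_one hgi (m * m'), hm'.2, pow_one]

private lemma commute_of_equivalent {g h x : Perm Ω} (heq : g.EquivalentPerm h)
    (hx : Commute x g) : Commute x h := by
  ext a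
  rw [Equiv.Perm.mul_apply, Equiv.Perm.mul_apply]
  set i := Function.minimalPeriod h a with hi
  have hi1 : 1 ≤ i := minP_pos h a
  -- minP g a = i
  have hga : Function.minimalPeriod g a = i := by
    set j := Function.minimalPeriod g a with hj
    have hj1 : 1 ≤ j := minP_pos g a
    have hclsj := (heq j hj1).1
    have : a ∈ h.pointsOfCycleLength j := hclsj ▸ (rfl : a ∈ g.pointsOfCycleLength j)
    exact this ▸ rfl
  obtain ⟨hcls, k, hk⟩ := heq i hi1
  have hxa : Function.minimalPeriod h (x a) = i := by
    have hgxa : Function.minimalPeriod g (x a) = i := by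
      rw [minP_apply_commute hx, hga]
    have : x a ∈ h.pointsOfCycleLength i := hcls ▸ hgxa
    exact this
  have hcomm : Commute x (h.cyclePart i) := by
    rw [hk]
    exact (commute_cyclePart hx i).zpow_right k
  calc x (h a) = x (h.cyclePart i a) := by rw [cyclePart_apply_eq h hi.symm]
    _ = h.cyclePart i (x a) := by
        rw [← Equiv.Perm.mul_apply, ← Equiv.Perm.mul_apply, hcomm.eq]
    _ = h (x a) := cyclePart_apply_eq h hxa

end Aux

/-- Equivalent permutations have equal centralizers in the symmetric group. -/
theorem centralizer_eq_of_equivalent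
    (Ω : Type*) [Fintype Ω] [DecidableEq Ω] (g h : Equiv.Perm Ω)
    (heq : g.EquivalentPerm h) :
    Subgroup.centralizer ({g} : Set (Equiv.Perm Ω)) =
      Subgroup.centralizer ({h} : Set (Equiv.Perm Ω)) := by
  have key : ∀ g' h' : Equiv.Perm Ω, g'.EquivalentPerm h' →
      Subgroup.centralizer ({g'} : Set (Equiv.Perm Ω)) ≤
        Subgroup.centralizer ({h'} : Set (Equiv.Perm Ω)) := by
    intro g' h' he x hx
    rw [Subgroup.mem_centralizer_iff] at hx ⊢
    intro y hy
    rw [Set.mem_singleton_iff] at hy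
    subst hy
    have hxg : Commute x g' := (hx g' rfl).symm
    exact (commute_of_equivalent he hxg).symm
  exact le_antisymm (key g h heq) (key h g (equivalent_symm heq))
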